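/- For every natural number n, (n+1)! divides σ_n, and σ_n divides n!·lcm(1, 2, …, n, n+1). -/

import Mathlib

open Nat

/-- `σ n := ∏_{p prime} p ^ ⌊n / (p - 1)⌋` (only finitely many primes, those with
`p ≤ n + 1`, have a nonzero exponent; `n / (p - 1)` is natural division). -/
noncomputable def sigma' (n : ℕ) : ℕ := ∏ᶠ p ∈ {p : ℕ | p.Prime}, p ^ (n / (p - 1))

lemma my_digit_sum_pos {p : ℕ} (hp : 2 ≤ p) : ∀ n : ℕ, n ≠ 0 → 0 < (p.digits n).sum := by
  intro n
  induction n using Nat.strong_induction_on with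
  | _ n ih =>
    intro hn
    rw [Nat.digits_def' (by omega : 1 < p) (Nat.pos_of_ne_zero hn), List.sum_cons]
    rcases Nat.eq_zero_or_pos (n % p) with h | h
    · have hm : n / p ≠ 0 := by
        intro h0
        have hlt : n < p := by
          by_contra hge
          push_neg at hge
          have := Nat.div_pos hge (by omega : 0 < p)
          omega
        rw [Nat.mod_eq_of_lt hlt] at h
        omega
      have := ih (n / p) (Nat.div_lt_self (Nat.pos_of_ne_zero hn) (by omega)) hm
      omega
    · omega

lemma my_arithB {P m r e d : ℕ} (hP : 0 < P) (hIH : (e + 1) * P ≤ m + 1) :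
    (r + e + 1) * P ≤ (r + d + 1) * m + r + 1 := by
  have h1 : d + e * (r + d) ≤ (d + e * (r + d)) * P := Nat.le_mul_of_pos_right _ hP
  have h2 : ((e + 1) * P) * (r + d + 1) ≤ (m + 1) * (r + d + 1) :=
    Nat.mul_le_mul_right _ hIH
  have h3 : (r + e + 1) * P + (d + e * (r + d)) * P = ((e + 1) * P) * (r + d + 1) := by ring
  have h4 : (m + 1) * (r + d + 1) = (r + d + 1) * m + r + d + 1 := by ring
  omega

lemma my_crux_aux {p : ℕ} (hp : 2 ≤ p) :
    ∀ n k j : ℕ, j ≤ p - 1 → (p - 1) * k + j ≤ (p.digits n).sum → (j + 1) * p ^ k ≤ n + 1 := by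
  intro n
  induction n using Nat.strong_induction_on with
  | _ n ih =>
    intro k j hj hs
    rcases Nat.eq_zero_or_pos n with rfl | hn
    · simp only [Nat.digits_zero, List.sum_nil, Nat.le_zero] at hs
      have hk : k = 0 := by
        rcases Nat.mul_eq_zero.mp (by omega : (p - 1) * k = 0) with h | h
        · omega
        · exact h
      subst hk
      have hj0 : j = 0 := by omega
      subst hj0
      simp
    · have hd := Nat.digits_def' (by omega : 1 < p) hn
      rw [hd, List.sum_cons] at hs
      have hrp : n % p < p := Nat.mod_lt _ (by omega)
      have hnm : n = p * (n / p) + n % p := (Nat.div_add_mod n p).symm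
      have hmn : n / p < n := Nat.div_lt_self hn (by omega)
      match k with
      | 0 =>
        have hle : (p.digits n).sum ≤ n := Nat.digit_sum_le p n
        rw [hd, List.sum_cons] at hle
        simpa using (by omega : j + 1 ≤ n + 1)
      | k' + 1 =>
        have hexp : (p - 1) * (k' + 1) = (p - 1) * k' + (p - 1) := by ring
        have hQ : 0 < p ^ k' := Nat.pow_pos (by omega)
        have hQ1 : 0 < p ^ (k' + 1) := Nat.pow_pos (by omega)
        rcases le_or_gt j (n % p) with hjr | hjr
        · -- case A
          set d := p - 1 - n % p with hddef
          have hdp : n % p + d + 1 = p := by omega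
          have hIH : (d + j + 1) * p ^ k' ≤ n / p + 1 :=
            ih (n / p) hmn k' (d + j) (by omega) (by omega)
          have hmain : (j + 1) * p ^ (k' + 1) + d ≤ n + 1 + d := by
            calc (j + 1) * p ^ (k' + 1) + d
                ≤ (j + 1) * p ^ (k' + 1) + d * (p ^ k' * p) := by
                  have : d ≤ d * (p ^ k' * p) :=
                    Nat.le_mul_of_pos_right _ (by positivity)
                  omega
              _ = ((d + j + 1) * p ^ k') * p := by ring
              _ ≤ (n / p + 1) * p := Nat.mul_le_mul_right _ hIH
              _ = p * (n / p) + p := by ring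
              _ = n + 1 + d := by omega
          omega
        · -- case B
          set d := p - 1 - n % p with hddef
          have hdp : n % p + d + 1 = p := by omega
          set e := j - n % p with hedef
          have hej : n % p + e = j := by omega
          have he1 : 1 ≤ e := by omega
          have hIH : (e + 1) * p ^ (k' + 1) ≤ n / p + 1 :=
            ih (n / p) hmn (k' + 1) e (by omega) (by omega)
          have hgoal := my_arithB (P := p ^ (k' + 1)) (m := n / p) (r := n % p)
            (e := e) (d := d) hQ1 hIH
          rw [hdp] at hgoal
          have hje : n % p + e + 1 = j + 1 := by omega
          rw [hje] at hgoal
          omega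

lemma my_pow_digitsum_div_le {p : ℕ} (hp : 2 ≤ p) (n : ℕ) :
    p ^ ((p.digits n).sum / (p - 1)) ≤ n + 1 := by
  have h := my_crux_aux hp n ((p.digits n).sum / (p - 1)) ((p.digits n).sum % (p - 1))
    (le_of_lt (Nat.mod_lt _ (by omega)))
    (le_of_eq (Nat.div_add_mod _ _))
  calc p ^ ((p.digits n).sum / (p - 1))
      ≤ ((p.digits n).sum % (p - 1) + 1) * p ^ ((p.digits n).sum / (p - 1)) :=
        Nat.le_mul_of_pos_left _ (Nat.succ_pos _)
    _ ≤ n + 1 := h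

lemma my_digitsum_div_le_log {p : ℕ} (hp : 2 ≤ p) (n : ℕ) :
    (p.digits n).sum / (p - 1) ≤ Nat.log p (n + 1) :=
  (Nat.le_log_iff_pow_le (by omega) (Nat.succ_ne_zero n)).mpr (my_pow_digitsum_div_le hp n)

lemma my_val_succ_factorial_le {p : ℕ} (hp : p.Prime) (n : ℕ) :
    padicValNat p ((n + 1)!) ≤ n / (p - 1) := by
  haveI := Fact.mk hp
  have h2 : 2 ≤ p := hp.two_le
  have hL : (p - 1) * padicValNat p ((n + 1)!) = (n + 1) - (p.digits (n + 1)).sum :=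
    sub_one_mul_padicValNat_factorial (n + 1)
  have hs : 0 < (p.digits (n + 1)).sum := my_digit_sum_pos h2 (n + 1) (Nat.succ_ne_zero n)
  have h1 : (p - 1) * padicValNat p ((n + 1)!) ≤ n := by rw [hL]; omega
  rw [Nat.le_div_iff_mul_le (by omega : 0 < p - 1), mul_comm]
  exact h1

lemma my_div_le_val_add_log {p : ℕ} (hp : p.Prime) (n : ℕ) :
    n / (p - 1) ≤ padicValNat p (n !) + Nat.log p (n + 1) := by
  haveI := Fact.mk hp
  have h2 : 2 ≤ p := hp.two_le
  have hq : 0 < p - 1 := by omega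
  set s := (p.digits n).sum with hsdef
  set v := padicValNat p (n !) with hvdef
  set K := s / (p - 1) with hKdef
  have hL : (p - 1) * v = n - s := sub_one_mul_padicValNat_factorial n
  have hsn : s ≤ n := Nat.digit_sum_le p n
  have hK : (p - 1) * K + s % (p - 1) = s := Nat.div_add_mod s (p - 1)
  have hsum : (p - 1) * (v + K) + s % (p - 1) = n := by
    rw [Nat.mul_add, hL, add_assoc, hK]
    exact Nat.sub_add_cancel hsn
  have hdiv : n / (p - 1) = v + K := by
    rw [← hsum, Nat.mul_add_div hq, Nat.div_eq_of_lt (Nat.mod_lt _ hq), add_zero]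
  rw [hdiv]
  exact add_le_add_right (my_digitsum_div_le_log h2 n) v

lemma my_lcm_ne_zero (n : ℕ) : (Finset.Icc 1 (n + 1)).lcm id ≠ 0 := by
  intro h
  rw [Finset.lcm_eq_zero_iff] at h
  obtain ⟨x, hx, hx0⟩ := h
  rw [Finset.mem_Icc] at hx
  simp only [id] at hx0
  omega

lemma my_log_le_val_lcm {p : ℕ} (hp : p.Prime) (n : ℕ) :
    Nat.log p (n + 1) ≤ padicValNat p ((Finset.Icc 1 (n + 1)).lcm id) := by
  haveI := Fact.mk hp
  have hL0 := my_lcm_ne_zero n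
  have hmem : p ^ Nat.log p (n + 1) ∈ Finset.Icc 1 (n + 1) :=
    Finset.mem_Icc.mpr ⟨Nat.one_le_pow _ _ hp.pos, Nat.pow_log_le_self p (Nat.succ_ne_zero n)⟩
  have hdvd : p ^ Nat.log p (n + 1) ∣ (Finset.Icc 1 (n + 1)).lcm id :=
    Finset.dvd_lcm hmem
  have := (Nat.Prime.pow_dvd_iff_le_factorization hp hL0).mp hdvd
  rwa [Nat.factorization_def _ hp] at this

lemma my_sigma'_eq (n M : ℕ) (hM : n + 2 ≤ M) :
    sigma' n = ∏ p ∈ (Finset.range M).filter Nat.Prime, p ^ (n / (p - 1)) := by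
  rw [sigma']
  have key : ∀ p : ℕ, p.Prime → p ^ (n / (p - 1)) ≠ 1 → p ≤ n + 1 := by
    intro p hp hne
    by_contra h
    push_neg at h
    have : n / (p - 1) = 0 := Nat.div_eq_of_lt (by omega)
    simp [this] at hne
  have hfin : ({p : ℕ | p.Prime} ∩ Function.mulSupport fun p => p ^ (n / (p - 1))).Finite := by
    apply Set.Finite.subset (Set.finite_Icc 0 (n + 1))
    rintro p ⟨hp1, hp2⟩
    rw [Function.mem_mulSupport] at hp2
    exact Set.mem_Icc.mpr ⟨Nat.zero_le _, key p hp1 hp2⟩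
  rw [finprod_mem_eq_prod _ hfin]
  apply Finset.prod_subset
  · intro p hpmem
    rw [Set.Finite.mem_toFinset] at hpmem
    obtain ⟨hp1, hp2⟩ := hpmem
    rw [Function.mem_mulSupport] at hp2
    exact Finset.mem_filter.mpr ⟨Finset.mem_range.mpr (by have := key p hp1 hp2; omega), hp1⟩
  · intro p hpmem hnot
    rw [Set.Finite.mem_toFinset] at hnot
    by_contra h
    exact hnot ⟨(Finset.mem_filter.mp hpmem).2, Function.mem_mulSupport.mpr h⟩

/-- **Proposition 3.** For every natural number `n`, `(n+1)!` divides `σ n` and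
`σ n` divides `n! · lcm(1, 2, …, n, n+1)`. -/
theorem succ_factorial_dvd_sigma_and_sigma_dvd (n : ℕ) :
    (n + 1)! ∣ sigma' n ∧ sigma' n ∣ n ! * (Finset.Icc 1 (n + 1)).lcm id := by
  constructor
  · have hM1 : n + 2 ≤ (n + 1)! + 1 := by
      have := Nat.self_le_factorial (n + 1); omega
    rw [my_sigma'_eq n ((n + 1)! + 1) hM1]
    have hfac := Nat.prod_pow_prime_padicValNat ((n + 1)!) (Nat.factorial_ne_zero _)
      ((n + 1)! + 1) (Nat.lt_succ_self _)
    calc (n + 1)! = ∏ p ∈ (Finset.range ((n + 1)! + 1)).filter Nat.Prime,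
          p ^ padicValNat p ((n + 1)!) := hfac.symm
      _ ∣ ∏ p ∈ (Finset.range ((n + 1)! + 1)).filter Nat.Prime, p ^ (n / (p - 1)) := by
          apply Finset.prod_dvd_prod_of_dvd
          intro p hpmem
          exact pow_dvd_pow p (my_val_succ_factorial_le (Finset.mem_filter.mp hpmem).2 n)
  · set Λ := (Finset.Icc 1 (n + 1)).lcm id with hΛdef
    have hΛ0 : Λ ≠ 0 := my_lcm_ne_zero n
    have hΛge : n + 1 ≤ Λ :=
      Nat.le_of_dvd (Nat.pos_of_ne_zero hΛ0)
        (Finset.dvd_lcm (Finset.mem_Icc.mpr ⟨by omega, le_refl _⟩))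
    have hNZ : n ! * Λ ≠ 0 := mul_ne_zero (Nat.factorial_ne_zero n) hΛ0
    have hM2 : n + 2 ≤ n ! * Λ + 1 := by
      have h1 : Λ ≤ n ! * Λ := Nat.le_mul_of_pos_left Λ (Nat.factorial_pos n)
      omega
    rw [my_sigma'_eq n (n ! * Λ + 1) hM2]
    have hfac := Nat.prod_pow_prime_padicValNat (n ! * Λ) hNZ (n ! * Λ + 1) (Nat.lt_succ_self _)
    calc (∏ p ∈ (Finset.range (n ! * Λ + 1)).filter Nat.Prime, p ^ (n / (p - 1)))
        ∣ ∏ p ∈ (Finset.range (n ! * Λ + 1)).filter Nat.Prime, p ^ padicValNat p (n ! * Λ) := by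
          apply Finset.prod_dvd_prod_of_dvd
          intro p hpmem
          have hp : p.Prime := (Finset.mem_filter.mp hpmem).2
          haveI := Fact.mk hp
          apply pow_dvd_pow
          rw [padicValNat.mul (p := p) (Nat.factorial_ne_zero n) hΛ0]
          exact le_trans (my_div_le_val_add_log hp n)
            (add_le_add_right (my_log_le_val_lcm hp n) _)
      _ = n ! * Λ := hfac
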